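/- Let G be a finite simple graph with no isolated vertices, let H be a subgraph of G with vertex set U, and let G[U] be the subgraph of G induced by U. Then P(H) is a face of the edge polytope P(G) if and only if P(H) is a face of P(G[U]). -/

import Mathlib

open Set

lemma hull_face {n : ℕ} {S : Set (Fin n → ℝ)} (hS : S.Finite)
    (l : (Fin n → ℝ) →L[ℝ] ℝ) (M : ℝ) (hM : ∀ s ∈ S, l s ≤ M) (hT : ∃ s ∈ S, l s = M) :
    {x ∈ convexHull ℝ S | ∀ y ∈ convexHull ℝ S, l y ≤ l x}
      = convexHull ℝ {s ∈ S | l s = M} := by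
  classical
  have hub : ∀ x ∈ convexHull ℝ S, l x ≤ M := fun x hx =>
    convexHull_min hM (convex_halfSpace_le l.toLinearMap.isLinear M) hx
  obtain ⟨t, htS, htM⟩ := hT
  have htmem : t ∈ convexHull ℝ S := subset_convexHull ℝ S htS
  ext x
  constructor
  · rintro ⟨hx, hmax⟩
    have hxM : l x = M := le_antisymm (hub x hx) (htM ▸ hmax t htmem)
    have hx' : x ∈ convexHull ℝ (hS.toFinset : Set (Fin n → ℝ)) := by
      rwa [hS.coe_toFinset]
    rw [Finset.mem_convexHull] at hx'
    obtain ⟨w, hw₀, hw₁, hwx⟩ := hx'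
    have hlsum : ∑ y ∈ hS.toFinset, w y * l y = M := by
      have : l (hS.toFinset.centerMass w id) = ∑ y ∈ hS.toFinset, w y * l y := by
        rw [Finset.centerMass_eq_of_sum_1 _ _ hw₁]
        simp [map_sum, map_smul, smul_eq_mul]
      rw [hwx, hxM] at this
      exact this.symm
    have key : ∀ y ∈ hS.toFinset, w y ≠ 0 → l y = M := by
      by_contra hcon
      push_neg at hcon
      obtain ⟨y₀, hy₀, hwy₀, hly₀⟩ := hcon
      have hlt : l y₀ < M := lt_of_le_of_ne (hM y₀ (hS.mem_toFinset.mp hy₀)) hly₀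
      have hsum : ∑ y ∈ hS.toFinset, w y * l y < ∑ y ∈ hS.toFinset, w y * M :=
        Finset.sum_lt_sum
          (fun i hi => mul_le_mul_of_nonneg_left (hM i (hS.mem_toFinset.mp hi)) (hw₀ i hi))
          ⟨y₀, hy₀, mul_lt_mul_of_pos_left hlt
            (lt_of_le_of_ne (hw₀ y₀ hy₀) (Ne.symm hwy₀))⟩
      rw [← Finset.sum_mul, hw₁, one_mul, hlsum] at hsum
      exact lt_irrefl M hsum
    have hfil : ({y ∈ hS.toFinset | w y ≠ 0} : Finset _).centerMass w id = x := by
      rw [Finset.centerMass_filter_ne_zero, hwx]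
    rw [← hfil]
    apply Finset.centerMass_mem_convexHull
    · intro i hi; exact hw₀ i (Finset.mem_filter.mp hi).1
    · rw [Finset.sum_filter_ne_zero, hw₁]; norm_num
    · intro i hi
      obtain ⟨hi1, hi2⟩ := Finset.mem_filter.mp hi
      exact ⟨hS.mem_toFinset.mp hi1, key i hi1 hi2⟩
  · intro hx
    have hsub : {s ∈ S | l s = M} ⊆ S := fun s hs => hs.1
    have hx1 : x ∈ convexHull ℝ S := convexHull_mono hsub hx
    have hx2 : l x = M := by
      have : convexHull ℝ {s ∈ S | l s = M} ⊆ {y | l y = M} :=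
        convexHull_min (fun s hs => hs.2) (convex_hyperplane l.toLinearMap.isLinear M)
      exact this hx
    exact ⟨hx1, fun y hy => by rw [hx2]; exact hub y hy⟩

lemma exposed_restrict {n : ℕ} {A B C : Set (Fin n → ℝ)} (h : IsExposed ℝ A C)
    (hCB : C ⊆ B) (hBA : B ⊆ A) : IsExposed ℝ B C := by
  intro hC
  obtain ⟨l, hl⟩ := h hC
  obtain ⟨c, hc⟩ := hC
  have hcA := hl ▸ hc
  refine ⟨l, ?_⟩
  ext x
  constructor
  · intro hx
    have hx' := hl ▸ hx
    exact ⟨hCB hx, fun y hy => hx'.2 y (hBA hy)⟩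
  · rintro ⟨hxB, hxmax⟩
    rw [hl]
    refine ⟨hBA hxB, fun y hy => ?_⟩
    calc l y ≤ l c := hcA.2 y hy
      _ ≤ l x := hxmax c (hCB hc)


/-- The edge polytope of a subgraph `H` of a graph on the vertex set `Fin n`:
the convex hull in `ℝⁿ` of the points `e i + e j` over all edges `{i, j}` of `H`. -/
def subgraphEdgePolytope {n : ℕ} {G : SimpleGraph (Fin n)} (H : G.Subgraph) :
    Set (Fin n → ℝ) :=
  convexHull ℝ {x | ∃ i j : Fin n, H.Adj i j ∧ x = Pi.single i 1 + Pi.single j 1}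

/-- The edge polytope of a graph `G` on the vertex set `Fin n`. -/
def edgePolytope {n : ℕ} (G : SimpleGraph (Fin n)) : Set (Fin n → ℝ) :=
  convexHull ℝ {x | ∃ i j : Fin n, G.Adj i j ∧ x = Pi.single i 1 + Pi.single j 1}

/-- A face of a polytope is the intersection of the polytope with a supporting
hyperplane, together with `∅` and the polytope itself; this is captured by `IsExposed`. -/
def IsFaceOf {n : ℕ} (P F : Set (Fin n → ℝ)) : Prop :=
  IsExposed ℝ P F

/-- Let `G` be a graph with no isolated vertices, and let `H` be a subgraph of `G` with
vertex set `U = H.verts` (no isolated vertices).  Then `P(H)` is a face of `P(G)` if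
and only if `P(H)` is a face of `P(G[U])`, where `G[U]` is the subgraph of `G` induced
by `U`. -/
theorem face_is_local {n : ℕ} (G : SimpleGraph (Fin n))
    (hiso : ∀ v : Fin n, ∃ w : Fin n, G.Adj v w)
    (H : G.Subgraph) (hHiso : ∀ v ∈ H.verts, ∃ w : Fin n, H.Adj v w) :
    IsFaceOf (edgePolytope G) (subgraphEdgePolytope H) ↔
      IsFaceOf (subgraphEdgePolytope ((⊤ : G.Subgraph).induce H.verts))
        (subgraphEdgePolytope H) := by
  classical
  set U : Set (Fin n) := H.verts with hUdef
  set SH : Set (Fin n → ℝ) :=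
    {x | ∃ i j : Fin n, H.Adj i j ∧ x = Pi.single i 1 + Pi.single j 1} with hSHdef
  set SGU : Set (Fin n → ℝ) :=
    {x | ∃ i j : Fin n, ((⊤ : G.Subgraph).induce U).Adj i j ∧
      x = Pi.single i 1 + Pi.single j 1} with hSGUdef
  set SG : Set (Fin n → ℝ) :=
    {x | ∃ i j : Fin n, G.Adj i j ∧ x = Pi.single i 1 + Pi.single j 1} with hSGdef
  -- inclusions
  have hSH_sub : SH ⊆ SGU := by
    rintro s ⟨i, j, hij, rfl⟩
    exact ⟨i, j, ⟨hij.fst_mem, hij.snd_mem,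
      (SimpleGraph.Subgraph.top_adj).mpr hij.adj_sub⟩, rfl⟩
  have hSGU_sub : SGU ⊆ SG := by
    rintro s ⟨i, j, hij, rfl⟩
    exact ⟨i, j, hij.adj_sub, rfl⟩
  -- finiteness
  have hSGfin : SG.Finite := by
    apply Set.Finite.subset (Set.finite_range
      (fun p : Fin n × Fin n => (Pi.single p.1 1 + Pi.single p.2 1 : Fin n → ℝ)))
    rintro s ⟨i, j, _, rfl⟩
    exact ⟨(i, j), rfl⟩
  have hSGUfin : SGU.Finite := hSGfin.subset hSGU_sub
  -- the functional counting coordinates in U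
  set l : (Fin n → ℝ) →L[ℝ] ℝ :=
    ∑ i ∈ Finset.univ.filter (· ∈ U), ContinuousLinearMap.proj i with hldef
  have lsingle : ∀ a : Fin n, l (Pi.single a 1) = if a ∈ U then (1 : ℝ) else 0 := by
    intro a
    simp [hldef, ContinuousLinearMap.sum_apply, ContinuousLinearMap.proj_apply,
      Pi.single_apply, Finset.sum_ite_eq', Finset.mem_filter]
  have lval : ∀ a b : Fin n, l (Pi.single a 1 + Pi.single b 1)
      = (if a ∈ U then (1 : ℝ) else 0) + (if b ∈ U then (1 : ℝ) else 0) := by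
    intro a b
    rw [map_add, lsingle, lsingle]
  have hSG_le : ∀ s ∈ SG, l s ≤ 2 := by
    rintro s ⟨i, j, hij, rfl⟩
    rw [lval]
    split_ifs <;> norm_num
  have hSGU_eq : SGU = {s ∈ SG | l s = 2} := by
    ext s
    constructor
    · rintro ⟨i, j, hij, rfl⟩
      obtain ⟨hiU, hjU, htop⟩ := hij
      refine ⟨⟨i, j, (SimpleGraph.Subgraph.top_adj).mp htop, rfl⟩, ?_⟩
      rw [lval, if_pos hiU, if_pos hjU]
      norm_num
    · rintro ⟨⟨i, j, hij, rfl⟩, h2⟩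
      rw [lval] at h2
      have hiU : i ∈ U := by
        by_contra hc
        rw [if_neg hc] at h2
        split_ifs at h2 <;> norm_num at h2
      have hjU : j ∈ U := by
        by_contra hc
        rw [if_neg hc] at h2
        split_ifs at h2 <;> norm_num at h2
      exact ⟨i, j, ⟨hiU, hjU, (SimpleGraph.Subgraph.top_adj).mpr hij⟩, rfl⟩
  have hnot2 : ∀ s ∈ SG, s ∉ SGU → l s ≤ 1 := by
    intro s hs hns
    rw [hSGU_eq] at hns
    have h2 : l s ≠ 2 := fun h => hns ⟨hs, h⟩
    obtain ⟨i, j, hij, rfl⟩ := hs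
    rw [lval] at h2 ⊢
    split_ifs at h2 ⊢ <;> norm_num at h2 <;> norm_num
  show IsExposed ℝ (convexHull ℝ SG) (convexHull ℝ SH)
      ↔ IsExposed ℝ (convexHull ℝ SGU) (convexHull ℝ SH)
  constructor
  · intro hexp
    exact exposed_restrict hexp (convexHull_mono hSH_sub) (convexHull_mono hSGU_sub)
  · intro hexp hFne
    have hSHne : SH.Nonempty := by
      rwa [convexHull_nonempty_iff] at hFne
    obtain ⟨l₂, hl₂⟩ := hexp hFne
    have hSGUne : SGU.Nonempty := hSHne.mono hSH_sub
    have hT0ne : hSGUfin.toFinset.Nonempty := by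
      rwa [Set.Finite.toFinset_nonempty]
    set c := hSGUfin.toFinset.sup' hT0ne (fun s => l₂ s) with hcdef
    have hcub : ∀ s ∈ SGU, l₂ s ≤ c := fun s hs =>
      Finset.le_sup' (fun s => l₂ s) (hSGUfin.mem_toFinset.mpr hs)
    have hcex : ∃ s ∈ SGU, l₂ s = c := by
      obtain ⟨s, hs, hseq⟩ := Finset.exists_mem_eq_sup' hT0ne (fun s => l₂ s)
      exact ⟨s, hSGUfin.mem_toFinset.mp hs, hseq.symm⟩
    have hQface := hull_face hSGUfin l₂ c hcub hcex
    have hF_eq : convexHull ℝ SH = convexHull ℝ {s ∈ SGU | l₂ s = c} := by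
      rw [← hQface]
      exact hl₂
    -- choose ε
    have hSGne' : hSGfin.toFinset.Nonempty := by
      rw [Set.Finite.toFinset_nonempty]
      exact hSGUne.mono hSGU_sub
    set K := hSGfin.toFinset.sup' hSGne' (fun s => l₂ s - c) with hKdef
    have hKub : ∀ s ∈ SG, l₂ s - c ≤ K := fun s hs =>
      Finset.le_sup' (fun s => l₂ s - c) (hSGfin.mem_toFinset.mpr hs)
    have hK0 : 0 ≤ K := by
      obtain ⟨s, hs, hseq⟩ := hcex
      have := hKub s (hSGU_sub hs)
      rw [hseq] at this
      linarith
    set ε : ℝ := 1 / (K + 1) with hεdef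
    have hεpos : 0 < ε := by rw [hεdef]; positivity
    have hεK : ε * K < 1 := by
      rw [hεdef, div_mul_eq_mul_div, div_lt_one (by linarith), one_mul]
      linarith
    set l₃ : (Fin n → ℝ) →L[ℝ] ℝ := l + ε • l₂ with hl₃def
    have hl₃app : ∀ x, l₃ x = l x + ε * l₂ x := by
      intro x
      simp [hl₃def]
    have hstrict : ∀ s ∈ SG, s ∉ SGU → l₃ s < 2 + ε * c := by
      intro s hs hns
      have h1 : l s ≤ 1 := hnot2 s hs hns
      have h2 : ε * (l₂ s - c) ≤ ε * K := mul_le_mul_of_nonneg_left (hKub s hs) hεpos.le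
      rw [hl₃app]
      nlinarith
    have hupper : ∀ s ∈ SG, l₃ s ≤ 2 + ε * c := by
      intro s hs
      by_cases hsU : s ∈ SGU
      · have h2 : l s = 2 := by
          rw [hSGU_eq] at hsU
          exact hsU.2
        have := hcub s hsU
        rw [hl₃app, h2]
        nlinarith
      · exact (hstrict s hs hsU).le
    have heq : {s ∈ SG | l₃ s = 2 + ε * c} = {s ∈ SGU | l₂ s = c} := by
      ext s
      constructor
      · rintro ⟨hs, hseq⟩
        by_cases hsU : s ∈ SGU
        · have h2 : l s = 2 := by
            rw [hSGU_eq] at hsU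
            exact hsU.2
          rw [hl₃app, h2] at hseq
          have hmul : ε * l₂ s = ε * c := by linarith
          exact ⟨hsU, mul_left_cancel₀ hεpos.ne' hmul⟩
        · exact absurd hseq (ne_of_lt (hstrict s hs hsU))
      · rintro ⟨hsU, hseq⟩
        have h2 : l s = 2 := by
          rw [hSGU_eq] at hsU
          exact hsU.2
        exact ⟨hSGU_sub hsU, by rw [hl₃app, h2, hseq]⟩
    have hex3 : ∃ s ∈ SG, l₃ s = 2 + ε * c := by
      obtain ⟨s, hsU, hseq⟩ := hcex
      have h2 : l s = 2 := by
        rw [hSGU_eq] at hsU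
        exact hsU.2
      exact ⟨s, hSGU_sub hsU, by rw [hl₃app, h2, hseq]⟩
    refine ⟨l₃, ?_⟩
    have hPface := hull_face hSGfin l₃ (2 + ε * c) hupper hex3
    rw [heq] at hPface
    show convexHull ℝ SH = {x ∈ convexHull ℝ SG | ∀ y ∈ convexHull ℝ SG, l₃ y ≤ l₃ x}
    rw [hF_eq]
    exact hPface.symm
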